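/- arXiv:2501.17364 — 2 statements merged into one kernel-verified Lean document; each statement's English description precedes it below -/
import Mathlib

section
/- Invertible generalized complex numbers are dense in ℂ̃_ρ with respect to the sharp topology: for every z ∈ ℂ̃_ρ and every invertible r ∈ ℝ̃_ρ with r > 0, there exists an invertible z* ∈ ℂ̃_ρ with |z − z*| < r. -/
open Filter Topology

namespace RC

def F : Filter ℝ := nhdsWithin 0 (Set.Ioi 0)

/-- A gauge: a net `ρ : (0,1] → (0,1]` with `ρ ε → 0` as `ε → 0⁺`. -/
def Gauge (ρ : ℝ → ℝ) : Prop :=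
  (∀ ε ∈ Set.Ioc (0:ℝ) 1, ρ ε ∈ Set.Ioc (0:ℝ) 1) ∧ Tendsto ρ F (nhds 0)

/-- ρ-moderate real nets: `x_ε = O(ρ_ε^{-N})` for some `N`. -/
def Mod (ρ x : ℝ → ℝ) : Prop :=
  ∃ N : ℕ, ∃ C : ℝ, ∀ᶠ ε in F, |x ε| ≤ C * (ρ ε)⁻¹ ^ N

/-- ρ-negligible real nets: `x_ε = O(ρ_ε^{N})` for all `N`. -/
def Ngl (ρ x : ℝ → ℝ) : Prop :=
  ∀ N : ℕ, ∃ C : ℝ, ∀ᶠ ε in F, |x ε| ≤ C * ρ ε ^ N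

def Eqv (ρ x y : ℝ → ℝ) : Prop := Ngl ρ (x - y)

/-- The order on generalized numbers, at the level of representatives. -/
def leG (ρ x y : ℝ → ℝ) : Prop :=
  ∀ x', Mod ρ x' → Eqv ρ x' x → ∃ y', Mod ρ y' ∧ Eqv ρ y' y ∧ ∀ᶠ ε in F, x' ε ≤ y' ε

/-- Invertibility in the quotient ring, at the level of representatives. -/
def InvG (ρ x : ℝ → ℝ) : Prop := ∃ y, Mod ρ y ∧ Eqv ρ (x * y) 1

def ltG (ρ x y : ℝ → ℝ) : Prop := leG ρ x y ∧ InvG ρ (y - x)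

def posInv (ρ r : ℝ → ℝ) : Prop := ltG ρ 0 r

def ModC (ρ : ℝ → ℝ) (x : ℝ → ℂ) : Prop :=
  ∃ N : ℕ, ∃ C : ℝ, ∀ᶠ ε in F, ‖x ε‖ ≤ C * (ρ ε)⁻¹ ^ N

def NglC (ρ : ℝ → ℝ) (x : ℝ → ℂ) : Prop :=
  ∀ N : ℕ, ∃ C : ℝ, ∀ᶠ ε in F, ‖x ε‖ ≤ C * ρ ε ^ N

def EqvC (ρ : ℝ → ℝ) (x y : ℝ → ℂ) : Prop := NglC ρ (x - y)

def InvC (ρ : ℝ → ℝ) (x : ℝ → ℂ) : Prop := ∃ y, ModC ρ y ∧ EqvC ρ (x * y) 1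

noncomputable def absC (x : ℝ → ℂ) : ℝ → ℝ := fun ε => ‖x ε‖

-- AUX

lemma mem_F_Ioc : ∀ᶠ ε in F, ε ∈ Set.Ioc (0:ℝ) 1 :=
  Ioc_mem_nhdsGT_of_mem (by constructor <;> norm_num)

lemma rho_pos {ρ : ℝ → ℝ} (hρ : Gauge ρ) : ∀ᶠ ε in F, 0 < ρ ε ∧ ρ ε ≤ 1 :=
  mem_F_Ioc.mono fun ε hε => ⟨(hρ.1 ε hε).1, (hρ.1 ε hε).2⟩

lemma rho_small {ρ : ℝ → ℝ} (hρ : Gauge ρ) {c : ℝ} (hc : 0 < c) :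
    ∀ᶠ ε in F, ρ ε < c :=
  hρ.2.eventually (Filter.Tendsto.eventually_lt_const hc tendsto_id)

lemma Mod_bound {ρ x : ℝ → ℝ} (hρ : Gauge ρ) (h : Mod ρ x) :
    ∃ N : ℕ, ∃ C : ℝ, 1 ≤ C ∧ ∀ᶠ ε in F, |x ε| ≤ C * (ρ ε)⁻¹ ^ N := by
  obtain ⟨N, C, h⟩ := h
  refine ⟨N, max C 1, le_max_right _ _, ?_⟩
  filter_upwards [h, rho_pos hρ] with ε h1 h2
  have : (0:ℝ) ≤ (ρ ε)⁻¹ ^ N := pow_nonneg (inv_nonneg.mpr h2.1.le) N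
  exact h1.trans (mul_le_mul_of_nonneg_right (le_max_left _ _) this)

lemma invG_of_bound {ρ x : ℝ → ℝ} (hρ : Gauge ρ) {b : ℝ} (hb : 0 < b) {m : ℕ}
    (h : ∀ᶠ ε in F, b * ρ ε ^ m ≤ |x ε|) : InvG ρ x := by
  refine ⟨fun ε => (x ε)⁻¹, ⟨m, b⁻¹, ?_⟩, ?_⟩
  · filter_upwards [h, rho_pos hρ] with ε h1 h2
    have hp : (0:ℝ) < b * ρ ε ^ m := mul_pos hb (pow_pos h2.1 m)
    have hx : 0 < |x ε| := hp.trans_le h1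
    rw [abs_inv]
    calc |x ε|⁻¹ ≤ (b * ρ ε ^ m)⁻¹ := by
            exact inv_anti₀ hp h1
      _ = b⁻¹ * (ρ ε)⁻¹ ^ m := by rw [mul_inv, inv_pow]
  · intro n
    refine ⟨1, ?_⟩
    filter_upwards [h, rho_pos hρ] with ε h1 h2
    have hp : (0:ℝ) < b * ρ ε ^ m := mul_pos hb (pow_pos h2.1 m)
    have hx : x ε ≠ 0 := by
      intro h0; rw [h0] at h1; simp at h1; nlinarith
    have : (x * (fun ε => (x ε)⁻¹) - 1) ε = 0 := by
      simp [Pi.mul_apply, mul_inv_cancel₀ hx]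
    rw [this]
    simpa using (mul_nonneg zero_le_one (pow_nonneg h2.1.le n))

lemma invC_of_bound {ρ : ℝ → ℝ} {x : ℝ → ℂ} (hρ : Gauge ρ) {b : ℝ} (hb : 0 < b) {m : ℕ}
    (h : ∀ᶠ ε in F, b * ρ ε ^ m ≤ ‖x ε‖) : InvC ρ x := by
  refine ⟨fun ε => (x ε)⁻¹, ⟨m, b⁻¹, ?_⟩, ?_⟩
  · filter_upwards [h, rho_pos hρ] with ε h1 h2
    have hp : (0:ℝ) < b * ρ ε ^ m := mul_pos hb (pow_pos h2.1 m)
    rw [norm_inv]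
    calc (‖x ε‖)⁻¹ ≤ (b * ρ ε ^ m)⁻¹ := inv_anti₀ hp h1
      _ = b⁻¹ * (ρ ε)⁻¹ ^ m := by rw [mul_inv, inv_pow]
  · intro n
    refine ⟨1, ?_⟩
    filter_upwards [h, rho_pos hρ] with ε h1 h2
    have hp : (0:ℝ) < b * ρ ε ^ m := mul_pos hb (pow_pos h2.1 m)
    have hx : x ε ≠ 0 := by
      intro h0; rw [h0] at h1; simp at h1; nlinarith
    have : (x * (fun ε => (x ε)⁻¹) - 1) ε = 0 := by
      simp [Pi.mul_apply, mul_inv_cancel₀ hx]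
    rw [this]
    simpa using (mul_nonneg zero_le_one (pow_nonneg h2.1.le n))

lemma Mod_add {ρ x y : ℝ → ℝ} (hρ : Gauge ρ) (hx : Mod ρ x) (hy : Mod ρ y) :
    Mod ρ (x + y) := by
  obtain ⟨N1, C1, hC1, h1⟩ := Mod_bound hρ hx
  obtain ⟨N2, C2, hC2, h2⟩ := Mod_bound hρ hy
  refine ⟨max N1 N2, C1 + C2, ?_⟩
  filter_upwards [h1, h2, rho_pos hρ] with ε h1 h2 h3
  have hinv : (1:ℝ) ≤ (ρ ε)⁻¹ := (one_le_inv₀ h3.1).mpr h3.2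
  have e1 : (ρ ε)⁻¹ ^ N1 ≤ (ρ ε)⁻¹ ^ max N1 N2 :=
    pow_le_pow_right₀ hinv (le_max_left _ _)
  have e2 : (ρ ε)⁻¹ ^ N2 ≤ (ρ ε)⁻¹ ^ max N1 N2 :=
    pow_le_pow_right₀ hinv (le_max_right _ _)
  calc |(x + y) ε| ≤ |x ε| + |y ε| := abs_add_le _ _
    _ ≤ C1 * (ρ ε)⁻¹ ^ max N1 N2 + C2 * (ρ ε)⁻¹ ^ max N1 N2 := by
        have := mul_le_mul_of_nonneg_left e1 (by linarith : (0:ℝ) ≤ C1)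
        have := mul_le_mul_of_nonneg_left e2 (by linarith : (0:ℝ) ≤ C2)
        gcongr <;> linarith
    _ = (C1 + C2) * (ρ ε)⁻¹ ^ max N1 N2 := by ring

lemma Mod_neg {ρ x : ℝ → ℝ} (hx : Mod ρ x) : Mod ρ (-x) := by
  obtain ⟨N, C, h⟩ := hx
  exact ⟨N, C, h.mono fun ε hε => by simpa using hε⟩

lemma Mod_sub {ρ x y : ℝ → ℝ} (hρ : Gauge ρ) (hx : Mod ρ x) (hy : Mod ρ y) :
    Mod ρ (x - y) := by
  have := Mod_add hρ hx (Mod_neg hy)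
  simpa [sub_eq_add_neg] using this

lemma posInv_bound {ρ r : ℝ → ℝ} (hρ : Gauge ρ) (hr : posInv ρ r) :
    ∃ (N : ℕ) (a : ℝ), 0 < a ∧ ∀ᶠ ε in F, a * ρ ε ^ N ≤ r ε := by
  obtain ⟨hle, y, hy, hinv⟩ := hr
  obtain ⟨N, C, hC, hyb⟩ := Mod_bound hρ hy
  have hCpos : (0:ℝ) < C := by linarith
  obtain ⟨C1, h1⟩ := hinv 1
  -- nonnegative representative
  obtain ⟨r', hr'mod, hr'eqv, hr'le⟩ := hle 0 ⟨0, 0, Eventually.of_forall (by simp)⟩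
    (fun n => ⟨0, Eventually.of_forall (by simp)⟩)
  obtain ⟨C2, h2⟩ := hr'eqv (N + 1)
  set b : ℝ := 1 / (2 * C) with hbdef
  have hb : 0 < b := by positivity
  refine ⟨N, b / 2, by positivity, ?_⟩
  have hsm1 : ∀ᶠ ε in F, ρ ε < 1 / (2 * (|C1| + 1)) := rho_small hρ (by positivity)
  have hsm2 : ∀ᶠ ε in F, ρ ε < b / (2 * (|C2| + 1)) := rho_small hρ (by positivity)
  filter_upwards [h1, h2, hyb, hr'le, rho_pos hρ, hsm1, hsm2] with ε h1 h2 hyb hr'le hρε hsm1 hsm2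
  have hρ0 : 0 < ρ ε := hρε.1
  have hρN : 0 < ρ ε ^ N := by positivity
  -- |r ε * y ε - 1| ≤ 1/2
  have e1 : |r ε * y ε - 1| ≤ 1 / 2 := by
    have : ((r - 0) * y - 1) ε = r ε * y ε - 1 := by simp [Pi.mul_apply]
    rw [this] at h1
    have : C1 * ρ ε ^ 1 ≤ 1 / 2 := by
      have h' : C1 * ρ ε ≤ |C1| * ρ ε := mul_le_mul_of_nonneg_right (le_abs_self _) hρ0.le
      have h'' : |C1| * ρ ε ≤ |C1| * (1 / (2 * (|C1| + 1))) :=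
        mul_le_mul_of_nonneg_left hsm1.le (abs_nonneg _)
      have h3 : |C1| * (1 / (2 * (|C1| + 1))) ≤ 1 / 2 := by
        rw [mul_one_div, div_le_div_iff₀ (by positivity) (by norm_num)]
        nlinarith [abs_nonneg C1]
      calc C1 * ρ ε ^ 1 = C1 * ρ ε := by ring
        _ ≤ 1/2 := by linarith
    linarith
  -- hence |r ε| ≥ b * ρ ε ^ N
  have e2 : (1:ℝ)/2 ≤ |r ε| * |y ε| := by
    have t := abs_sub_abs_le_abs_sub (1:ℝ) (r ε * y ε)
    rw [abs_one, abs_sub_comm, abs_mul] at t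
    linarith
  have hyabs : |y ε| ≤ C * (ρ ε)⁻¹ ^ N := hyb
  have e3 : b * ρ ε ^ N ≤ |r ε| := by
    have hKpos : (0:ℝ) < C * (ρ ε)⁻¹ ^ N := by positivity
    have hhalf : (1:ℝ)/2 ≤ |r ε| * (C * (ρ ε)⁻¹ ^ N) := by
      have := mul_le_mul_of_nonneg_left hyabs (abs_nonneg (r ε))
      linarith
    have key : b * ρ ε ^ N * (C * (ρ ε)⁻¹ ^ N) = 1 / 2 := by
      rw [hbdef, inv_pow]
      field_simp
    have heq : b * ρ ε ^ N = (1/2) / (C * (ρ ε)⁻¹ ^ N) :=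
      (eq_div_iff hKpos.ne').mpr key
    rw [heq]
    exact (div_le_iff₀ hKpos).mpr hhalf
  -- r' - r is small
  have e4 : |r' ε - r ε| ≤ b / 2 * ρ ε ^ N := by
    have : (r' - r) ε = r' ε - r ε := rfl
    rw [this] at h2
    have hC2 : C2 * ρ ε ^ (N + 1) ≤ b / 2 * ρ ε ^ N := by
      have h' : C2 * ρ ε ^ (N+1) ≤ |C2| * (ρ ε * ρ ε ^ N) := by
        calc C2 * ρ ε ^ (N+1) ≤ |C2| * ρ ε ^ (N+1) :=
              mul_le_mul_of_nonneg_right (le_abs_self C2) (pow_nonneg hρ0.le _)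
          _ = |C2| * (ρ ε * ρ ε ^ N) := by rw [pow_succ]; ring
      have h'' : |C2| * ρ ε ≤ b / 2 := by
        have := mul_le_mul_of_nonneg_left hsm2.le (abs_nonneg C2)
        have h3 : |C2| * (b / (2 * (|C2| + 1))) ≤ b / 2 := by
          rw [mul_div_assoc', div_le_div_iff₀ (by positivity) (by norm_num)]
          nlinarith [abs_nonneg C2, hb]
        linarith
      nlinarith [abs_nonneg C2]
    linarith
  -- conclude
  have h0r' : 0 ≤ r' ε := by simpa using hr'le
  rcases abs_cases (r ε) with ⟨he, _⟩ | ⟨he, hneg⟩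
  · nlinarith [mul_pos hb hρN]
  · exfalso
    rcases abs_cases (r' ε - r ε) with ⟨he2, _⟩ | ⟨he2, he3⟩
    · nlinarith [mul_pos hb hρN]
    · linarith


/-- Invertible generalized complex numbers are dense in the sharp topology. -/
theorem invertible_dense (ρ : ℝ → ℝ) (hρ : Gauge ρ)
    (z : ℝ → ℂ) (hz : ModC ρ z)
    (r : ℝ → ℝ) (hr : Mod ρ r) (hrpos : posInv ρ r) :
    ∃ w : ℝ → ℂ, ModC ρ w ∧ InvC ρ w ∧ ltG ρ (absC (z - w)) r := by
  obtain ⟨N, a, ha, hrlow⟩ := posInv_bound hρ hrpos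
  set δ : ℝ → ℝ := fun ε => a / 4 * ρ ε ^ N with hδdef
  set w : ℝ → ℂ := fun ε =>
    if ‖z ε‖ < δ ε then z ε + ((2 * δ ε : ℝ) : ℂ) else z ε with hwdef
  have hδpos : ∀ᶠ ε in F, 0 < δ ε := by
    filter_upwards [rho_pos hρ] with ε hε
    exact mul_pos (by linarith) (pow_pos hε.1 N)
  have hlb : ∀ᶠ ε in F, δ ε ≤ ‖w ε‖ := by
    filter_upwards [hδpos] with ε hδε
    by_cases h : ‖z ε‖ < δ ε
    · have h1 : ‖((2 * δ ε : ℝ) : ℂ)‖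
          ≤ ‖z ε + ((2 * δ ε : ℝ) : ℂ)‖ + ‖z ε‖ := by
        have := norm_add_le (z ε + ((2 * δ ε : ℝ) : ℂ)) (-(z ε))
        simpa using this
      rw [Complex.norm_real, Real.norm_eq_abs, abs_of_nonneg (by linarith : (0:ℝ) ≤ 2 * δ ε)] at h1
      simp only [hwdef, if_pos h]
      linarith
    · push_neg at h
      simp only [hwdef, if_neg (not_lt.mpr h)]
      exact h
  have hdist : ∀ᶠ ε in F, ‖(z - w) ε‖ ≤ 2 * δ ε := by
    filter_upwards [hδpos] with ε hδε
    by_cases h : ‖z ε‖ < δ ε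
    · have : (z - w) ε = -((2 * δ ε : ℝ) : ℂ) := by
        simp [hwdef, if_pos h, Pi.sub_apply]
      rw [this, norm_neg, Complex.norm_real, Real.norm_eq_abs,
        abs_of_nonneg (by linarith : (0:ℝ) ≤ 2 * δ ε)]
    · have : (z - w) ε = 0 := by simp [hwdef, if_neg h, Pi.sub_apply]
      rw [this]; simp; linarith
  have hgap : ∀ᶠ ε in F, a / 2 * ρ ε ^ N ≤ r ε - absC (z - w) ε := by
    filter_upwards [hrlow, hdist] with ε h1 h2
    have : absC (z - w) ε = ‖(z - w) ε‖ := rfl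
    rw [this]
    simp only [hδdef] at h2
    linarith
  have habsmod : Mod ρ (absC (z - w)) := by
    refine ⟨0, a, ?_⟩
    filter_upwards [hdist, rho_pos hρ] with ε h1 h2
    have hρN1 : ρ ε ^ N ≤ 1 := pow_le_one₀ h2.1.le h2.2
    have : absC (z - w) ε = ‖(z - w) ε‖ := rfl
    rw [this, abs_of_nonneg (norm_nonneg _)]
    simp only [hδdef] at h1
    simp only [pow_zero, mul_one]
    nlinarith
  refine ⟨w, ?_, ?_, ?_, ?_⟩
  · -- ModC w
    obtain ⟨Nz, Cz, hzb⟩ := hz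
    refine ⟨Nz, Cz + a, ?_⟩
    filter_upwards [hzb, hdist, rho_pos hρ] with ε h1 h2 h3
    have hρN1 : ρ ε ^ N ≤ 1 := pow_le_one₀ h3.1.le h3.2
    have hinv1 : (1:ℝ) ≤ (ρ ε)⁻¹ ^ Nz := one_le_pow₀ ((one_le_inv₀ h3.1).mpr h3.2)
    have htri : ‖w ε‖ ≤ ‖z ε‖ + ‖(z - w) ε‖ := by
      have h0 := norm_add_le (z ε) (-((z - w) ε))
      have e : z ε + -((z - w) ε) = w ε := by simp [Pi.sub_apply]
      rw [e, norm_neg] at h0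
      exact h0
    simp only [hδdef] at h2
    nlinarith [norm_nonneg (z ε)]
  · -- InvC w
    refine invC_of_bound hρ (by linarith : (0:ℝ) < a / 4) (m := N) ?_
    filter_upwards [hlb] with ε h
    simpa [hδdef] using h
  · -- leG
    intro x' hx' heqv
    refine ⟨x' + (r - absC (z - w)), Mod_add hρ hx' (Mod_sub hρ hr habsmod), ?_, ?_⟩
    · have e : x' + (r - absC (z - w)) - r = x' - absC (z - w) := by
        funext ε; simp [Pi.add_apply, Pi.sub_apply]; ring
      show Ngl ρ (x' + (r - absC (z - w)) - r)
      rw [e]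
      exact heqv
    · filter_upwards [hgap, rho_pos hρ] with ε h1 h2
      have : (0:ℝ) < ρ ε ^ N := pow_pos h2.1 N
      simp only [Pi.add_apply, Pi.sub_apply]
      nlinarith
  · -- InvG (r - absC (z - w))
    refine invG_of_bound hρ (by linarith : (0:ℝ) < a / 2) (m := N) ?_
    filter_upwards [hgap] with ε h
    have : (r - absC (z - w)) ε = r ε - absC (z - w) ε := rfl
    rw [this]
    exact h.trans (le_abs_self _)

end RC
end

section
/- Let c = [c_ε] ∈ ℂ̃_ρ and r = [r_ε] ∈ ℝ̃_ρ with r > 0. Then the sharp open ball equals the strongly internal set of Euclidean balls, B_r(c) = ⟨E_{r_ε}(c_ε)⟩, and the sharp closed ball equals the internal set, cl B_r(c) = [E_{r_ε}(c_ε)], where E_s(w) := { z ∈ ℂ : |z − w| < s }. -/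
open Filter Topology

namespace RC

/-- Membership in the internal set `[A_ε]` of complex subsets. -/
def memIntC (ρ : ℝ → ℝ) (A : ℝ → Set ℂ) (x : ℝ → ℂ) : Prop :=
  ∃ x', ModC ρ x' ∧ EqvC ρ x' x ∧ ∀ᶠ ε in F, x' ε ∈ A ε

/-- Membership in the strongly internal set `⟨A_ε⟩` of complex subsets. -/
def memStrC (ρ : ℝ → ℝ) (A : ℝ → Set ℂ) (x : ℝ → ℂ) : Prop :=
  ∀ x', ModC ρ x' → EqvC ρ x' x → ∀ᶠ ε in F, x' ε ∈ A ε

open Filter Topology Set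


variable {ρ : ℝ → ℝ}

instance : F.NeBot := by
  have : (nhdsWithin (0:ℝ) (Set.Ioi 0)).NeBot := nhdsGT_neBot 0
  exact this

lemma Ioo_mem_F {a : ℝ} (ha : 0 < a) : Set.Ioo 0 a ∈ F :=
  Ioo_mem_nhdsGT_of_mem ⟨le_refl _, ha⟩

lemma ev_F : ∀ᶠ ε in F, 0 < ε ∧ ε ≤ 1 := by
  filter_upwards [Ioo_mem_F one_pos] with ε hε
  exact ⟨hε.1, hε.2.le⟩

lemma gauge_ev (hρ : Gauge ρ) : ∀ᶠ ε in F, 0 < ρ ε ∧ ρ ε ≤ 1 := by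
  filter_upwards [ev_F] with ε hε
  exact ⟨(hρ.1 ε ⟨hε.1, hε.2⟩).1, (hρ.1 ε ⟨hε.1, hε.2⟩).2⟩

lemma gauge_small (hρ : Gauge ρ) {d : ℝ} (hd : 0 < d) : ∀ᶠ ε in F, ρ ε < d :=
  hρ.2 (gt_mem_nhds hd)

lemma ngl_of_le {g h : ℝ → ℝ} (hle : ∀ᶠ ε in F, |g ε| ≤ |h ε|) (hh : Ngl ρ h) : Ngl ρ g := by
  intro N
  obtain ⟨C, hC⟩ := hh N
  exact ⟨C, by filter_upwards [hle, hC] with ε h1 h2; exact h1.trans h2⟩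

lemma Ngl.add {g h : ℝ → ℝ} (hg : Ngl ρ g) (hh : Ngl ρ h) :
    Ngl ρ (fun ε => g ε + h ε) := by
  intro N
  obtain ⟨C1, h1⟩ := hg N
  obtain ⟨C2, h2⟩ := hh N
  refine ⟨C1 + C2, ?_⟩
  filter_upwards [h1, h2] with ε h1 h2
  calc |g ε + h ε| ≤ |g ε| + |h ε| := abs_add_le _ _
    _ ≤ C1 * ρ ε ^ N + C2 * ρ ε ^ N := add_le_add h1 h2
    _ = (C1 + C2) * ρ ε ^ N := by ring

lemma ngl_of_ev_zero (hρ : Gauge ρ) {g : ℝ → ℝ} (h : ∀ᶠ ε in F, g ε = 0) : Ngl ρ g := by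
  intro N
  refine ⟨1, ?_⟩
  filter_upwards [h, gauge_ev hρ] with ε h1 h2
  rw [h1]
  simp [pow_nonneg h2.1.le]

lemma eqv_refl (hρ : Gauge ρ) (x : ℝ → ℝ) : Eqv ρ x x :=
  ngl_of_ev_zero hρ (by filter_upwards with ε; simp)

lemma ngl_lt (hρ : Gauge ρ) {g : ℝ → ℝ} (hg : Ngl ρ g) {C : ℝ} (hC : 0 < C) (N : ℕ) :
    ∀ᶠ ε in F, |g ε| < C * ρ ε ^ N := by
  obtain ⟨C1, h1⟩ := hg (N + 1)
  have hd : 0 < C / (|C1| + 1) := by positivity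
  filter_upwards [h1, gauge_ev hρ, gauge_small hρ hd] with ε h1 h2 h3
  have hρpos : 0 < ρ ε := h2.1
  have hpN : 0 < ρ ε ^ N := pow_pos hρpos N
  have key : C1 * ρ ε ^ (N + 1) ≤ |C1| * ρ ε * ρ ε ^ N := by
    have : C1 * ρ ε ^ (N + 1) ≤ |C1| * ρ ε ^ (N + 1) :=
      mul_le_mul_of_nonneg_right (le_abs_self C1) (by positivity)
    calc C1 * ρ ε ^ (N + 1) ≤ |C1| * ρ ε ^ (N + 1) := this
      _ = |C1| * ρ ε * ρ ε ^ N := by ring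
  have h4 : |C1| * ρ ε < C := by
    have he : (|C1| + 1) * (C / (|C1| + 1)) = C := by field_simp
    have h5 : |C1| * ρ ε < (|C1| + 1) * (C / (|C1| + 1)) := by
      nlinarith [abs_nonneg C1]
    rwa [he] at h5
  calc |g ε| ≤ C1 * ρ ε ^ (N+1) := h1
    _ ≤ |C1| * ρ ε * ρ ε ^ N := key
    _ < C * ρ ε ^ N := by nlinarith

lemma mod_of_le {g h : ℝ → ℝ} (hle : ∀ᶠ ε in F, |g ε| ≤ |h ε|) (hh : Mod ρ h) : Mod ρ g := by
  obtain ⟨N, C, hC⟩ := hh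
  exact ⟨N, C, by filter_upwards [hle, hC] with ε h1 h2; exact h1.trans h2⟩

lemma Mod.add (hρ : Gauge ρ) {g h : ℝ → ℝ} (hg : Mod ρ g) (hh : Mod ρ h) :
    Mod ρ (fun ε => g ε + h ε) := by
  obtain ⟨N1, C1, h1⟩ := hg
  obtain ⟨N2, C2, h2⟩ := hh
  refine ⟨max N1 N2, |C1| + |C2|, ?_⟩
  filter_upwards [h1, h2, gauge_ev hρ] with ε h1 h2 h3
  have hi : 1 ≤ (ρ ε)⁻¹ := (one_le_inv_iff₀.mpr ⟨h3.1, h3.2⟩ : _)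
  have hinv : 0 < (ρ ε)⁻¹ := by positivity
  have e1 : C1 * (ρ ε)⁻¹ ^ N1 ≤ |C1| * (ρ ε)⁻¹ ^ (max N1 N2) := by
    calc C1 * (ρ ε)⁻¹ ^ N1 ≤ |C1| * (ρ ε)⁻¹ ^ N1 :=
          mul_le_mul_of_nonneg_right (le_abs_self _) (by positivity)
      _ ≤ |C1| * (ρ ε)⁻¹ ^ (max N1 N2) :=
          mul_le_mul_of_nonneg_left (pow_le_pow_right₀ hi (le_max_left _ _)) (abs_nonneg _)
  have e2 : C2 * (ρ ε)⁻¹ ^ N2 ≤ |C2| * (ρ ε)⁻¹ ^ (max N1 N2) := by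
    calc C2 * (ρ ε)⁻¹ ^ N2 ≤ |C2| * (ρ ε)⁻¹ ^ N2 :=
          mul_le_mul_of_nonneg_right (le_abs_self _) (by positivity)
      _ ≤ |C2| * (ρ ε)⁻¹ ^ (max N1 N2) :=
          mul_le_mul_of_nonneg_left (pow_le_pow_right₀ hi (le_max_right _ _)) (abs_nonneg _)
  calc |g ε + h ε| ≤ |g ε| + |h ε| := abs_add_le _ _
    _ ≤ C1 * (ρ ε)⁻¹ ^ N1 + C2 * (ρ ε)⁻¹ ^ N2 := add_le_add h1 h2
    _ ≤ (|C1| + |C2|) * (ρ ε)⁻¹ ^ (max N1 N2) := by rw [add_mul]; exact add_le_add e1 e2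

lemma mod_absC {w : ℝ → ℂ} (hw : ModC ρ w) : Mod ρ (absC w) := by
  obtain ⟨N, C, hC⟩ := hw
  exact ⟨N, C, by filter_upwards [hC] with ε h; simpa [absC, abs_of_nonneg (norm_nonneg _)] using h⟩

lemma modC_of_le {w : ℝ → ℂ} {g : ℝ → ℝ} (hle : ∀ᶠ ε in F, ‖w ε‖ ≤ g ε)
    (hg : Mod ρ g) : ModC ρ w := by
  obtain ⟨N, C, hC⟩ := hg
  exact ⟨N, C, by filter_upwards [hle, hC] with ε h1 h2; exact h1.trans ((le_abs_self _).trans h2)⟩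

lemma nglC_of_le {w : ℝ → ℂ} {g : ℝ → ℝ} (hle : ∀ᶠ ε in F, ‖w ε‖ ≤ g ε)
    (hg : Ngl ρ g) : NglC ρ w := by
  intro N
  obtain ⟨C, hC⟩ := hg N
  exact ⟨C, by filter_upwards [hle, hC] with ε h1 h2; exact h1.trans ((le_abs_self _).trans h2)⟩

lemma ngl_absC {w : ℝ → ℂ} (hw : NglC ρ w) : Ngl ρ (absC w) := by
  intro N
  obtain ⟨C, hC⟩ := hw N
  exact ⟨C, by filter_upwards [hC] with ε h; simpa [absC, abs_of_nonneg (norm_nonneg _)] using h⟩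

lemma mod_abs {g : ℝ → ℝ} (hg : Mod ρ g) : Mod ρ (fun ε => |g ε|) := by
  obtain ⟨N, C, hC⟩ := hg
  exact ⟨N, C, by filter_upwards [hC] with ε h; simpa using h⟩

/-- `u = absC (z - c)` is moderate. -/
lemma mod_u {z c : ℝ → ℂ} (hρ : Gauge ρ) (hz : ModC ρ z) (hc : ModC ρ c) :
    Mod ρ (absC (z - c)) := by
  apply mod_of_le (h := fun ε => ‖z ε‖ + ‖c ε‖)
  · filter_upwards with ε
    have h : ‖z ε - c ε‖ ≤ ‖z ε‖ + ‖c ε‖ := by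
      simpa using norm_sub_le (z ε) (c ε)
    have h2 : (0:ℝ) ≤ ‖z ε‖ + ‖c ε‖ := by positivity
    calc |absC (z - c) ε| = ‖z ε - c ε‖ := by
          simp [absC, abs_of_nonneg (norm_nonneg _)]
      _ ≤ ‖z ε‖ + ‖c ε‖ := h
      _ ≤ |‖z ε‖ + ‖c ε‖| := le_abs_self _
  · exact Mod.add hρ (mod_absC hz) (mod_absC hc)
/-- Unit direction of a complex number (1 if zero). -/
noncomputable def dir (w : ℂ) : ℂ := if w = 0 then 1 else w / (‖w‖ : ℂ)

lemma abs_dir (w : ℂ) : ‖dir w‖ = 1 := by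
  unfold dir
  split_ifs with h
  · simp
  · rw [norm_div]
    rw [Complex.norm_real, Real.norm_eq_abs, abs_of_nonneg (norm_nonneg w)]
    rw [div_self (by simpa using h)]

lemma abs_add_dir (w : ℂ) {d : ℝ} (hd : 0 ≤ d) :
    ‖w + (d : ℂ) * dir w‖ = ‖w‖ + d := by
  unfold dir
  split_ifs with h
  · simp [h, abs_of_nonneg hd]
  · have ha : (0:ℝ) < ‖w‖ := by simpa [norm_pos_iff] using h
    have key : w + (d : ℂ) * (w / (‖w‖ : ℂ)) =
        w * (((1 + d / ‖w‖ : ℝ)) : ℂ) := by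
      push_cast
      field_simp
    rw [key, norm_mul, Complex.norm_real, Real.norm_eq_abs, abs_of_nonneg (by positivity)]
    field_simp

/-- Retract `w` to length at most `t` (for `t ≥ 0`). -/
noncomputable def ret (w : ℂ) (t : ℝ) : ℂ :=
  if ‖w‖ ≤ t then w else ((t / ‖w‖ : ℝ) : ℂ) * w

lemma abs_ret (w : ℂ) {t : ℝ} (ht : 0 ≤ t) :
    ‖ret w t‖ = min (‖w‖) t := by
  unfold ret
  split_ifs with h
  · rw [min_eq_left h]
  · push_neg at h
    have ha : (0:ℝ) < ‖w‖ := lt_of_le_of_lt ht h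
    rw [norm_mul, Complex.norm_real, Real.norm_eq_abs, abs_of_nonneg (by positivity), min_eq_right h.le]
    field_simp

lemma abs_sub_ret (w : ℂ) {t : ℝ} (ht : 0 ≤ t) :
    ‖w - ret w t‖ = ‖w‖ - min (‖w‖) t := by
  unfold ret
  split_ifs with h
  · simp [min_eq_left h]
  · push_neg at h
    have ha : (0:ℝ) < ‖w‖ := lt_of_le_of_lt ht h
    have key : w - ((t / ‖w‖ : ℝ) : ℂ) * w =
        w * (((1 - t / ‖w‖ : ℝ)) : ℂ) := by
      push_cast
      ring
    have h1 : (0:ℝ) ≤ 1 - t / ‖w‖ := by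
      rw [sub_nonneg, div_le_one ha]
      exact h.le
    rw [key, norm_mul, Complex.norm_real, Real.norm_eq_abs, abs_of_nonneg h1, min_eq_right h.le]
    field_simp
lemma invG_lower (hρ : Gauge ρ) {x : ℝ → ℝ} (hx : InvG ρ x) :
    ∃ N : ℕ, ∃ C : ℝ, 0 < C ∧ ∀ᶠ ε in F, C * ρ ε ^ N ≤ |x ε| := by
  obtain ⟨y, ⟨N1, C1, hy⟩, hinv⟩ := hx
  refine ⟨N1, 1 / (2 * (|C1| + 1)), by positivity, ?_⟩
  have hhalf := ngl_lt hρ hinv (C := 1/2) (by norm_num) 0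
  filter_upwards [hy, hhalf, gauge_ev hρ] with ε hy hh hg
  have hρpos : 0 < ρ ε := hg.1
  have hxy : (1:ℝ)/2 ≤ |x ε * y ε| := by
    have h1 : |x ε * y ε - 1| < 1/2 := by simpa using hh
    have := abs_sub_abs_le_abs_sub (1 : ℝ) (x ε * y ε)
    rw [abs_sub_comm] at this
    simp only [abs_one] at this
    linarith
  have hy2 : |y ε| ≤ (|C1| + 1) * (ρ ε)⁻¹ ^ N1 := by
    calc |y ε| ≤ C1 * (ρ ε)⁻¹ ^ N1 := hy
      _ ≤ (|C1| + 1) * (ρ ε)⁻¹ ^ N1 := by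
          apply mul_le_mul_of_nonneg_right _ (by positivity)
          have := le_abs_self C1; linarith
  rw [abs_mul] at hxy
  have hip : (0:ℝ) < (ρ ε)⁻¹ ^ N1 := by positivity
  have hyne : 0 < |y ε| := by
    by_contra h
    push_neg at h
    have : |y ε| = 0 := le_antisymm h (abs_nonneg _)
    rw [this, mul_zero] at hxy; linarith
  -- |x| ≥ (1/2) / |y| ≥ (1/2) / ((|C1|+1) ρ⁻¹^N1)
  have h3 : 1/2 / ((|C1| + 1) * (ρ ε)⁻¹ ^ N1) ≤ |x ε| := by
    rw [div_le_iff₀ (by positivity)]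
    calc (1:ℝ)/2 ≤ |x ε| * |y ε| := hxy
      _ ≤ |x ε| * ((|C1| + 1) * (ρ ε)⁻¹ ^ N1) :=
          mul_le_mul_of_nonneg_left hy2 (abs_nonneg _)
  refine le_trans (le_of_eq ?_) h3
  have hne1 : |C1| + 1 ≠ 0 := by positivity
  have hne2 : ρ ε ^ N1 ≠ 0 := by positivity
  rw [inv_pow]
  field_simp

lemma lower_of_abs (hρ : Gauge ρ) {x g : ℝ → ℝ} {C : ℝ} {N : ℕ} (hC : 0 < C)
    (habs : ∀ᶠ ε in F, C * ρ ε ^ N ≤ |x ε|) (hg : Ngl ρ g)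
    (h2 : ∀ᶠ ε in F, -|g ε| ≤ x ε) : ∀ᶠ ε in F, C * ρ ε ^ N ≤ x ε := by
  filter_upwards [habs, h2, ngl_lt hρ hg hC N] with ε h1 h2 h3
  rcases abs_cases (x ε) with ⟨he, _⟩ | ⟨he, _⟩
  · linarith [he ▸ h1]
  · linarith [he ▸ h1]

/-- From `ltG u r` (with `u` moderate) extract a uniform positive lower bound on `r - u`. -/
lemma ltG_lower (hρ : Gauge ρ) {u r : ℝ → ℝ} (hu : Mod ρ u) (h : ltG ρ u r) :
    ∃ N : ℕ, ∃ C : ℝ, 0 < C ∧ ∀ᶠ ε in F, C * ρ ε ^ N ≤ r ε - u ε := by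
  obtain ⟨hle, hinv⟩ := h
  obtain ⟨N, C, hC, habs⟩ := invG_lower hρ hinv
  obtain ⟨y', hy'mod, hy'r, hy'le⟩ := hle u hu (eqv_refl hρ u)
  refine ⟨N, C, hC, ?_⟩
  have habs' : ∀ᶠ ε in F, C * ρ ε ^ N ≤ |r ε - u ε| := by
    filter_upwards [habs] with ε h
    simpa [Pi.sub_apply] using h
  apply lower_of_abs hρ hC habs' hy'r
  filter_upwards [hy'le] with ε h
  have : -|(y' - r) ε| ≤ r ε - y' ε := by
    rw [neg_le]
    simpa [Pi.sub_apply, neg_sub] using neg_abs_le ((y' - r) ε) |>.trans (le_refl _) |> fun _ => le_abs_self (y' ε - r ε)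
  simp only [Pi.sub_apply]
  have h1 : -(|y' ε - r ε|) ≤ y' ε - r ε := neg_abs_le _
  have h2 : y' ε - r ε ≤ |y' ε - r ε| := le_abs_self _
  linarith

/-- Conversely, a uniform lower bound on `r - u` gives `ltG u r`. -/
lemma ltG_of_lower (hρ : Gauge ρ) {u r : ℝ → ℝ} (hu : Mod ρ u) (hr : Mod ρ r) {N : ℕ} {C : ℝ}
    (hC : 0 < C) (h : ∀ᶠ ε in F, C * ρ ε ^ N ≤ r ε - u ε) : ltG ρ u r := by
  constructor
  · intro x' hx' hx'u
    refine ⟨fun ε => x' ε + (r ε - u ε), ?_, ?_, ?_⟩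
    · apply Mod.add hρ hx'
      apply Mod.add hρ hr
      exact mod_of_le (by filter_upwards with ε; simp) hu
    · have : (fun ε => x' ε + (r ε - u ε)) - r = x' - u := by
        funext ε; simp [Pi.sub_apply]; ring
      unfold Eqv
      rw [this]
      exact hx'u
    · filter_upwards [h, gauge_ev hρ] with ε h1 h2
      nlinarith [pow_pos h2.1 N]
  · refine ⟨fun ε => (r ε - u ε)⁻¹, ?_, ?_⟩
    · refine ⟨N, C⁻¹, ?_⟩
      filter_upwards [h, gauge_ev hρ] with ε h1 h2
      obtain ⟨hρp, -⟩ := h2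
      have hpos : 0 < C * ρ ε ^ N := by positivity
      have hpos2 : 0 < r ε - u ε := lt_of_lt_of_le hpos h1
      rw [abs_of_nonneg (inv_nonneg.mpr hpos2.le)]
      calc (r ε - u ε)⁻¹ ≤ (C * ρ ε ^ N)⁻¹ := by
            apply inv_anti₀ hpos h1
        _ = C⁻¹ * (ρ ε)⁻¹ ^ N := by rw [mul_inv, inv_pow]
    · apply ngl_of_ev_zero hρ
      filter_upwards [h, gauge_ev hρ] with ε h1 h2
      obtain ⟨hρp, -⟩ := h2
      have hpos : 0 < r ε - u ε := lt_of_lt_of_le (by positivity) h1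
      simp only [Pi.sub_apply, Pi.mul_apply, Pi.one_apply]
      rw [mul_inv_cancel₀ (ne_of_gt hpos)]
      ring
lemma ngl_to_mod {g : ℝ → ℝ} (hg : Ngl ρ g) : Mod ρ g := by
  obtain ⟨C, hC⟩ := hg 0
  exact ⟨0, C, by simpa using hC⟩

lemma ceil_pow_le (hρ : Gauge ρ) (N : ℕ) :
    ∀ᶠ ε in F, ρ ε ^ ⌈ε⁻¹⌉₊ ≤ ρ ε ^ N := by
  filter_upwards [gauge_ev hρ, Ioo_mem_F (show (0:ℝ) < 1/((N:ℝ)+1) by positivity)] with ε hg hε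
  have hεpos : (0:ℝ) < ε := hε.1
  have h2 : ε < 1/((N:ℝ)+1) := hε.2
  have h4 : (N:ℝ) < ε⁻¹ := by
    have h3 : ε * ((N:ℝ)+1) < 1 := by
      rw [← lt_div_iff₀ (by positivity)]; exact h2
    rw [show ε⁻¹ = 1/ε from (one_div ε).symm, lt_div_iff₀ hεpos]
    nlinarith
  have hceil : N ≤ ⌈ε⁻¹⌉₊ := (Nat.lt_ceil.mpr h4).le
  exact pow_le_pow_of_le_one hg.1.le hg.2 hceil

lemma ngl_rho_ceil (hρ : Gauge ρ) : Ngl ρ (fun ε => ρ ε ^ ⌈ε⁻¹⌉₊) := by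
  intro N
  refine ⟨1, ?_⟩
  filter_upwards [ceil_pow_le hρ N, gauge_ev hρ] with ε h1 hg
  rw [one_mul, abs_of_nonneg (pow_nonneg hg.1.le _)]
  exact h1

lemma posInv_lower (hρ : Gauge ρ) {r : ℝ → ℝ} (hrpos : posInv ρ r) :
    ∃ m : ℕ, ∃ C0 : ℝ, 0 < C0 ∧ ∀ᶠ ε in F, C0 * ρ ε ^ m ≤ r ε := by
  have h0 : Mod ρ (0 : ℝ → ℝ) := ⟨0, 1, by filter_upwards with ε; simp⟩
  obtain ⟨m, C0, hC0, h⟩ := ltG_lower hρ h0 hrpos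
  exact ⟨m, C0, hC0, by filter_upwards [h] with ε h; simpa using h⟩
lemma memStrC_of_ltG {z c : ℝ → ℂ} {r : ℝ → ℝ} (hρ : Gauge ρ) (hz : ModC ρ z) (hc : ModC ρ c)
    (h : ltG ρ (absC (z - c)) r) :
    memStrC ρ (fun ε => Metric.ball (c ε) (r ε)) z := by
  obtain ⟨N, C, hC, hlow⟩ := ltG_lower hρ (mod_u hρ hz hc) h
  intro z' hz' hz'z
  have hn : Ngl ρ (absC (z' - z)) := ngl_absC hz'z
  filter_upwards [hlow, ngl_lt hρ hn hC N] with ε h1 h2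
  simp only [Metric.mem_ball, Complex.dist_eq]
  have e1 : absC (z - c) ε = ‖z ε - c ε‖ := rfl
  have e2 : |absC (z' - z) ε| = ‖z' ε - z ε‖ := by
    simp [absC, abs_of_nonneg (norm_nonneg _)]
  rw [e1] at h1
  rw [e2] at h2
  have htri : ‖z' ε - c ε‖ ≤ ‖z ε - c ε‖ + ‖z' ε - z ε‖ := by
    have : z' ε - c ε = (z ε - c ε) + (z' ε - z ε) := by ring
    rw [this]
    exact norm_add_le _ _
  linarith

lemma leG_of_memIntC {z c : ℝ → ℂ} {r : ℝ → ℝ} (hρ : Gauge ρ) (hz : ModC ρ z) (hc : ModC ρ c)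
    (hr : Mod ρ r) (hmem : memIntC ρ (fun ε => Metric.ball (c ε) (r ε)) z) :
    leG ρ (absC (z - c)) r := by
  obtain ⟨z', hz'mod, hz'z, hball⟩ := hmem
  set u : ℝ → ℝ := absC (z - c) with hu_def
  have hu : Mod ρ u := mod_u hρ hz hc
  have hn : Ngl ρ (absC (z' - z)) := ngl_absC hz'z
  -- eventually u ≤ r + n
  have hur : ∀ᶠ ε in F, u ε ≤ r ε + absC (z' - z) ε := by
    filter_upwards [hball] with ε hb
    simp only [Metric.mem_ball, Complex.dist_eq] at hb
    have htri : ‖z ε - c ε‖ ≤ ‖z' ε - c ε‖ + ‖z' ε - z ε‖ := by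
      have : z ε - c ε = (z' ε - c ε) + -(z' ε - z ε) := by ring
      rw [this]
      exact (norm_add_le _ _).trans (le_of_eq (by rw [norm_neg]))
    have : absC (z' - z) ε = ‖z' ε - z ε‖ := rfl
    rw [hu_def]
    show ‖z ε - c ε‖ ≤ _
    rw [this]
    linarith
  intro x' hx' hx'u
  refine ⟨fun ε => x' ε - u ε + max (u ε) (r ε), ?_, ?_, ?_⟩
  · have h1 : Mod ρ (fun ε => -(u ε)) := mod_of_le (by filter_upwards with ε; simp) hu
    have hmax : Mod ρ (fun ε => max (u ε) (r ε)) := by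
      apply mod_of_le (h := fun ε => |u ε| + |r ε|) _ (Mod.add hρ (mod_abs hu) (mod_abs hr))
      filter_upwards with ε
      have h2 : |max (u ε) (r ε)| ≤ |u ε| + |r ε| := by
        rcases max_cases (u ε) (r ε) with ⟨h, _⟩ | ⟨h, _⟩ <;> rw [h] <;>
          [linarith [abs_nonneg (r ε), le_refl |u ε|]; linarith [abs_nonneg (u ε), le_refl |r ε|]]
      exact h2.trans (le_abs_self _)
    exact Mod.add hρ (Mod.add hρ hx' h1) hmax
  · unfold Eqv
    apply ngl_of_le (h := fun ε => |(x' - u) ε| + absC (z' - z) ε)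
    · filter_upwards [hur] with ε hur
      have hnn : 0 ≤ absC (z' - z) ε := norm_nonneg _
      have hm1 : max (u ε) (r ε) - r ε ≤ absC (z' - z) ε := by
        rcases max_cases (u ε) (r ε) with ⟨h, _⟩ | ⟨h, _⟩ <;> rw [h] <;> [linarith; linarith]
      have hm0 : 0 ≤ max (u ε) (r ε) - r ε := by
        have := le_max_right (u ε) (r ε); linarith
      have step : |(fun ε => x' ε - u ε + max (u ε) (r ε)) ε - r ε| ≤
          |(x' - u) ε| + absC (z' - z) ε := by
        have : (fun ε => x' ε - u ε + max (u ε) (r ε)) ε - r ε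
            = (x' - u) ε + (max (u ε) (r ε) - r ε) := by simp [Pi.sub_apply]; ring
        rw [this]
        calc |(x' - u) ε + (max (u ε) (r ε) - r ε)|
            ≤ |(x' - u) ε| + |max (u ε) (r ε) - r ε| := abs_add_le _ _
          _ ≤ |(x' - u) ε| + absC (z' - z) ε := by
              rw [abs_of_nonneg hm0]; linarith
      calc |((fun ε => x' ε - u ε + max (u ε) (r ε)) - r) ε|
          = |(fun ε => x' ε - u ε + max (u ε) (r ε)) ε - r ε| := by simp [Pi.sub_apply]
        _ ≤ |(x' - u) ε| + absC (z' - z) ε := step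
        _ ≤ |(|(x' - u) ε| + absC (z' - z) ε)| := le_abs_self _
    · exact Ngl.add (ngl_of_le (by filter_upwards with ε; rw [abs_abs]) hx'u) hn
  · filter_upwards with ε
    have := le_max_left (u ε) (r ε)
    linarith
lemma ltG_of_memStrC {z c : ℝ → ℂ} {r : ℝ → ℝ} (hρ : Gauge ρ) (hz : ModC ρ z) (hc : ModC ρ c)
    (hr : Mod ρ r) (hmem : memStrC ρ (fun ε => Metric.ball (c ε) (r ε)) z) :
    ltG ρ (absC (z - c)) r := by
  classical
  set u : ℝ → ℝ := absC (z - c) with hu_def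
  have hu : Mod ρ u := mod_u hρ hz hc
  -- Main claim: a uniform lower bound on r - u
  have claim : ∃ N : ℕ, ∀ᶠ ε in F, 1 * ρ ε ^ N ≤ r ε - u ε := by
    by_contra hcon
    push_neg at hcon
    have hfreq : ∀ k : ℕ, ∃ ε : ℝ, 0 < ε ∧ ε < 1/((k:ℝ)+1) ∧ r ε - u ε < ρ ε ^ k := by
      intro k
      have h1 : ∃ᶠ ε in F, ¬ (1 * ρ ε ^ k ≤ r ε - u ε) := (hcon k).mono fun ε h => not_le.mpr h
      have hev : ∀ᶠ ε in F, ε ∈ Set.Ioo 0 (1/((k:ℝ)+1)) :=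
        Ioo_mem_F (by positivity)
      obtain ⟨ε, hne, hm⟩ := (h1.and_eventually hev).exists
      refine ⟨ε, hm.1, hm.2, ?_⟩
      have := lt_of_not_ge hne
      linarith
    choose e he1 he2 he3 using hfreq
    set δ : ℝ → ℝ := fun ε => if ε ∈ Set.range e then max (r ε - u ε) 0 else 0 with hδ_def
    have hδ0 : ∀ ε, 0 ≤ δ ε := by
      intro ε
      rw [hδ_def]
      dsimp only
      split_ifs
      · exact le_max_right _ _
      · exact le_refl _
    have hδngl : Ngl ρ δ := by
      intro N
      refine ⟨1, ?_⟩
      have hne : ∀ᶠ ε in F, ∀ k ∈ Finset.range N, ε ≠ e k := by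
        rw [eventually_all_finset]
        intro k _
        filter_upwards [Ioo_mem_F (he1 k)] with ε hε
        exact ne_of_lt hε.2
      filter_upwards [hne, gauge_ev hρ] with ε hne hg
      rw [one_mul]
      have hρN : (0:ℝ) ≤ ρ ε ^ N := pow_nonneg hg.1.le N
      rw [hδ_def]
      dsimp only
      split_ifs with hmem'
      · obtain ⟨k, hk⟩ := hmem'
        have hkN : N ≤ k := by
          by_contra hlt
          push_neg at hlt
          exact hne k (Finset.mem_range.mpr hlt) hk.symm
        rw [abs_of_nonneg (le_max_right _ _)]
        apply max_le _ hρN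
        have h3 := he3 k
        rw [hk] at h3
        have := pow_le_pow_of_le_one hg.1.le hg.2 hkN
        linarith
      · simpa using hρN
    set z' : ℝ → ℂ := fun ε => z ε + (δ ε : ℂ) * dir (z ε - c ε) with hz'_def
    have habs : ∀ ε, ‖z' ε - c ε‖ = u ε + δ ε := by
      intro ε
      have e1 : z' ε - c ε = (z ε - c ε) + (δ ε : ℂ) * dir (z ε - c ε) := by
        rw [hz'_def]; ring
      rw [e1, abs_add_dir (z ε - c ε) (hδ0 ε)]
      rfl
    have hsub : ∀ ε, ‖z' ε - z ε‖ = δ ε := by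
      intro ε
      have e1 : z' ε - z ε = (δ ε : ℂ) * dir (z ε - c ε) := by rw [hz'_def]; ring
      rw [e1, norm_mul, abs_dir, Complex.norm_real, Real.norm_eq_abs, abs_of_nonneg (hδ0 ε), mul_one]
    have hz'mod : ModC ρ z' := by
      apply modC_of_le (g := fun ε => ‖z ε‖ + δ ε)
      · filter_upwards with ε
        calc ‖z' ε‖ = ‖z ε + (z' ε - z ε)‖ := by congr 1; ring
          _ ≤ ‖z ε‖ + ‖z' ε - z ε‖ := norm_add_le _ _
          _ = ‖z ε‖ + δ ε := by rw [hsub ε]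
      · exact Mod.add hρ (mod_absC hz) (ngl_to_mod hδngl)
    have hz'z : EqvC ρ z' z := by
      apply nglC_of_le (g := δ) _ hδngl
      filter_upwards with ε
      exact le_of_eq (hsub ε)
    have hball := hmem z' hz'mod hz'z
    have htend0 : Tendsto e atTop (nhds 0) := by
      apply squeeze_zero (fun k => (he1 k).le) (fun k => (he2 k).le)
      exact tendsto_one_div_add_atTop_nhds_zero_nat
    have htend : Tendsto e atTop F := by
      apply tendsto_nhdsWithin_of_tendsto_nhds_of_eventually_within e htend0
      exact Filter.Eventually.of_forall fun k => he1 k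
    have hball' : ∀ᶠ ε in F, ‖z' ε - c ε‖ < r ε := by
      filter_upwards [hball] with ε h
      simpa [Metric.mem_ball, Complex.dist_eq] using h
    have hev2 : ∀ᶠ k in atTop, ‖z' (e k) - c (e k)‖ < r (e k) :=
      htend.eventually hball'
    obtain ⟨k, hk⟩ := hev2.exists
    have hge : r (e k) ≤ u (e k) + δ (e k) := by
      have hmem' : e k ∈ Set.range e := ⟨k, rfl⟩
      rw [hδ_def]
      dsimp only
      rw [if_pos hmem']
      have := le_max_left (r (e k) - u (e k)) 0
      linarith
    rw [habs (e k)] at hk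
    linarith
  obtain ⟨N, hlow⟩ := claim
  exact ltG_of_lower hρ hu hr one_pos hlow

lemma memIntC_of_leG {z c : ℝ → ℂ} {r : ℝ → ℝ} (hρ : Gauge ρ) (hz : ModC ρ z) (hc : ModC ρ c)
    (hr : Mod ρ r) (hrpos : posInv ρ r) (h : leG ρ (absC (z - c)) r) :
    memIntC ρ (fun ε => Metric.ball (c ε) (r ε)) z := by
  set u : ℝ → ℝ := absC (z - c) with hu_def
  have hu : Mod ρ u := mod_u hρ hz hc
  obtain ⟨m, C0, hC0, hrlow⟩ := posInv_lower hρ hrpos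
  obtain ⟨y', hy'mod, hy'r, huy'⟩ := h u hu (eqv_refl hρ u)
  have hn : Ngl ρ (fun ε => |y' ε - r ε|) := by
    apply ngl_of_le _ hy'r
    filter_upwards with ε
    simp [Pi.sub_apply]
  have hur : ∀ᶠ ε in F, u ε ≤ r ε + |y' ε - r ε| := by
    filter_upwards [huy'] with ε h
    have := le_abs_self (y' ε - r ε)
    linarith
  set δ : ℝ → ℝ := fun ε => ρ ε ^ ⌈ε⁻¹⌉₊ with hδ_def
  have hδngl : Ngl ρ δ := ngl_rho_ceil hρ
  have hE : ∀ᶠ ε in F, 0 < δ ε ∧ δ ε ≤ r ε / 2 ∧ 0 < r ε := by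
    filter_upwards [ceil_pow_le hρ (m+1), hrlow, gauge_small hρ (half_pos hC0), gauge_ev hρ]
      with ε h1 h2 h3 hg
    have hρp : 0 < ρ ε := hg.1
    have hd1 : 0 < δ ε := pow_pos hρp _
    have hpm : 0 < ρ ε ^ m := pow_pos hρp m
    have hd2 : δ ε ≤ ρ ε * ρ ε ^ m := by
      rw [hδ_def]
      dsimp only
      calc ρ ε ^ ⌈ε⁻¹⌉₊ ≤ ρ ε ^ (m+1) := h1
        _ = ρ ε * ρ ε ^ m := by ring
    have hd3 : δ ε ≤ r ε / 2 := by
      calc δ ε ≤ ρ ε * ρ ε ^ m := hd2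
        _ ≤ (C0/2) * ρ ε ^ m := mul_le_mul_of_nonneg_right h3.le hpm.le
        _ ≤ r ε / 2 := by linarith
    exact ⟨hd1, hd3, by nlinarith⟩
  set z' : ℝ → ℂ := fun ε => c ε + ret (z ε - c ε) (r ε - δ ε) with hz'_def
  have habs : ∀ᶠ ε in F, ‖z' ε - c ε‖ = min (u ε) (r ε - δ ε) := by
    filter_upwards [hE] with ε hE
    have ht : 0 ≤ r ε - δ ε := by linarith [hE.2.1, hE.2.2]
    have e1 : z' ε - c ε = ret (z ε - c ε) (r ε - δ ε) := by rw [hz'_def]; ring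
    rw [e1, abs_ret _ ht]
    rfl
  have hsub : ∀ᶠ ε in F, ‖z' ε - z ε‖ = u ε - min (u ε) (r ε - δ ε) := by
    filter_upwards [hE] with ε hE
    have ht : 0 ≤ r ε - δ ε := by linarith [hE.2.1, hE.2.2]
    have e1 : z' ε - z ε = -((z ε - c ε) - ret (z ε - c ε) (r ε - δ ε)) := by
      rw [hz'_def]; ring
    rw [e1, norm_neg, abs_sub_ret _ ht]
    rfl
  have hz'mod : ModC ρ z' := by
    apply modC_of_le (g := fun ε => ‖c ε‖ + u ε)
    · filter_upwards [habs] with ε habs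
      calc ‖z' ε‖ = ‖c ε + (z' ε - c ε)‖ := by congr 1; ring
        _ ≤ ‖c ε‖ + ‖z' ε - c ε‖ := norm_add_le _ _
        _ ≤ ‖c ε‖ + u ε := by
            rw [habs]
            have := min_le_left (u ε) (r ε - δ ε)
            linarith
    · exact Mod.add hρ (mod_absC hc) hu
  have hz'z : EqvC ρ z' z := by
    apply nglC_of_le (g := fun ε => |y' ε - r ε| + δ ε) _ (Ngl.add hn hδngl)
    filter_upwards [hsub, hur, hE] with ε hsub hur hE
    simp only [Pi.sub_apply]
    rw [hsub]
    rcases min_cases (u ε) (r ε - δ ε) with ⟨hmin, _⟩ | ⟨hmin, hlt⟩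
    · rw [hmin]
      have := abs_nonneg (y' ε - r ε)
      linarith [hE.1]
    · rw [hmin]
      linarith
  refine ⟨z', hz'mod, hz'z, ?_⟩
  filter_upwards [habs, hE] with ε habs hE
  simp only [Metric.mem_ball, Complex.dist_eq]
  rw [habs]
  have := min_le_right (u ε) (r ε - δ ε)
  linarith [hE.1]

/-- The sharp open ball equals the strongly internal set of Euclidean balls, and the sharp
closed ball equals the internal set of Euclidean balls. -/
theorem ball_eq_stronglyInternal_closedBall_eq_internal (ρ : ℝ → ℝ) (hρ : Gauge ρ)
    (c : ℝ → ℂ) (hc : ModC ρ c) (r : ℝ → ℝ) (hr : Mod ρ r) (hrpos : posInv ρ r) :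
    ∀ z, ModC ρ z →
      ((ltG ρ (absC (z - c)) r ↔ memStrC ρ (fun ε => Metric.ball (c ε) (r ε)) z) ∧
       (leG ρ (absC (z - c)) r ↔ memIntC ρ (fun ε => Metric.ball (c ε) (r ε)) z)) := by
  intro z hz
  exact ⟨⟨fun h => memStrC_of_ltG hρ hz hc h, fun h => ltG_of_memStrC hρ hz hc hr h⟩,
    ⟨fun h => memIntC_of_leG hρ hz hc hr hrpos h, fun h => leG_of_memIntC hρ hz hc hr h⟩⟩

end RC
end
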